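/- Let P be an o–d path in the shift digraph D decomposed as an o–v path Q followed by an arc a, and equip each arc with its scenario-ω resource in the monoid M = {e, ∞} ∪ S. Then the resource of P under scenario ω, computed by the monoid sum ⊕ along its arcs, equals ((realized start time of the first job of the corresponding shift), (number of rescheduled jobs, realized completion time of the last non-rescheduled job), (number of jobs that would be rescheduled if the first job were rescheduled, corresponding completion time)); in particular the c_do-component of ⊕_{a∈P} q_a^ω equals the number of rescheduled jobs of the shift of P under ω. -/

import Mathlib

/-! Delay-propagation resources with times in `WithBot ℤ` (`⊥` playing the
role of `−∞`) and rescheduling counts in `ℕ`. -/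

structure ResW where
  tbg : WithBot ℤ
  cdo : ℕ
  tdo : WithBot ℤ
  cdt : ℕ
  tdt : WithBot ℤ

/-- The monoid `M = {e, ∞} ∪ S`. -/
inductive MW where
  | e : MW
  | inf : MW
  | res : ResW → MW

noncomputable def ResW.plus (a b : ResW) : ResW where
  tbg := a.tbg
  cdo := if a.tdo ≤ b.tbg then a.cdo + b.cdo else a.cdo + b.cdt
  tdo := if a.tdo ≤ b.tbg then b.tdo else b.tdt
  cdt := if a.tdt ≤ b.tbg then a.cdt + b.cdo else a.cdt + b.cdt
  tdt := if a.tdt ≤ b.tbg then b.tdo else b.tdt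

noncomputable def MW.plus : MW → MW → MW
  | MW.e, q => q
  | q, MW.e => q
  | MW.inf, _ => MW.inf
  | _, MW.inf => MW.inf
  | MW.res a, MW.res b => MW.res (a.plus b)

inductive Vtx (Job : Type) where
  | o : Vtx Job
  | d : Vtx Job
  | jv (j : Job) (hb : ℤ) (bl : Bool) : Vtx Job
  | ev (he : ℤ) : Vtx Job

inductive Walk (V : Type) (A : V → V → Prop) : V → V → Type
  | nil (v : V) : Walk V A v v
  | cons {u v w : V} (h : A u v) (p : Walk V A v w) : Walk V A u w

/-- The resource of a walk: `⊕` of the arc resources along its arcs. -/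
def Walk.res {V : Type} {A : V → V → Prop} {M : Type}
    (op : M → M → M) (e : M) (q : ∀ u v, A u v → M) :
    ∀ {u w : V}, Walk V A u w → M
  | _, _, .nil _ => e
  | _, _, .cons h p => op (q _ _ h) (p.res op e q)

section ShiftDigraph

variable {Job : Type} (bj fj : Job → ℤ) (Hb Hf : Finset ℤ)
  (blunch flunch tbr tmax tml : ℤ)

def Jbl (hb : ℤ) (j : Job) : Prop :=
  hb ≤ bj j ∧ fj j ≤ flunch - tbr ∧ fj j ≤ hb + tmax

def Jal (hb : ℤ) (j : Job) : Prop :=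
  hb ≤ bj j ∧ blunch + tbr ≤ bj j ∧ fj j ≤ hb + tmax

inductive Arc : Vtx Job → Vtx Job → Prop
  | o_bl {hb : ℤ} {j : Job} : hb ∈ Hb → hb ≤ flunch - tml →
      Jbl bj fj flunch tbr tmax hb j → Arc .o (.jv j hb true)
  | o_al {hb : ℤ} {j : Job} : hb ∈ Hb → flunch - tml < hb →
      Jal bj fj blunch tbr tmax hb j → Arc .o (.jv j hb false)
  | bl_bl {hb : ℤ} {j j' : Job} : hb ∈ Hb →
      Jbl bj fj flunch tbr tmax hb j → Jbl bj fj flunch tbr tmax hb j' →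
      fj j ≤ bj j' → Arc (.jv j hb true) (.jv j' hb true)
  | bl_al {hb : ℤ} {j j' : Job} : hb ∈ Hb →
      Jbl bj fj flunch tbr tmax hb j → Jal bj fj blunch tbr tmax hb j' →
      fj j + tbr ≤ bj j' → Arc (.jv j hb true) (.jv j' hb false)
  | al_al {hb : ℤ} {j j' : Job} : hb ∈ Hb →
      Jal bj fj blunch tbr tmax hb j → Jal bj fj blunch tbr tmax hb j' →
      fj j ≤ bj j' → Arc (.jv j hb false) (.jv j' hb false)
  | bl_ev_early {hb he : ℤ} {j : Job} : hb ∈ Hb → he ∈ Hf →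
      Jbl bj fj flunch tbr tmax hb j → he < blunch + tml →
      fj j ≤ he → he ≤ hb + tmax → Arc (.jv j hb true) (.ev he)
  | bl_ev_late {hb he : ℤ} {j : Job} : hb ∈ Hb → he ∈ Hf →
      Jbl bj fj flunch tbr tmax hb j → blunch + tml ≤ he →
      fj j + tbr ≤ he → he ≤ hb + tmax → Arc (.jv j hb true) (.ev he)
  | al_ev {hb he : ℤ} {j : Job} : hb ∈ Hb → he ∈ Hf →
      Jal bj fj blunch tbr tmax hb j → blunch + tml ≤ he →
      fj j ≤ he → he ≤ hb + tmax → Arc (.jv j hb false) (.ev he)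
  | ev_d {he : ℤ} : he ∈ Hf → Arc (.ev he) .d

variable (xb xe : Job → ℤ) (vl : Job → Bool)

/-- The realized ending time attached to an arc leaving a job vertex under the
scenario: `x_e(j)` for arcs staying on the same side or ending before the lunch
threshold, and `x_e(j) + t_br` for arcs crossing the lunch break. -/
def arcEnd (u v : Vtx Job) : WithBot ℤ :=
  match u, v with
  | .jv j _ true, .jv _ _ false => ((xe j + tbr : ℤ) : WithBot ℤ)
  | .jv j _ true, .ev he =>
      if blunch + tml ≤ he then ((xe j + tbr : ℤ) : WithBot ℤ)
      else ((xe j : ℤ) : WithBot ℤ)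
  | .jv j _ _, _ => ((xe j : ℤ) : WithBot ℤ)
  | _, _ => 0

/-- The scenario-`ω` resource of an arc: for an arc leaving a job vertex
`(j, h_b, side)` it is `(x_b(j), do-pair, (1, −∞))` where the do-pair is
`(1, −∞)` if `j` is very late and `(0, arcEnd)` otherwise; every other arc
carries the neutral element `e`. -/
noncomputable def qarc (u v : Vtx Job) : MW :=
  match u with
  | .jv j _ _ =>
      MW.res ⟨((xb j : ℤ) : WithBot ℤ),
        (if vl j then 1 else 0),
        (if vl j then ⊥ else arcEnd blunch tbr tml xe u v),
        1, ⊥⟩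
  | _ => MW.e

/-- The job data along a walk: for each arc leaving a job vertex `(j, ·, ·)`,
the triple (very-late flag, realized beginning time, realized ending time as
seen by the next activity). -/
def walkData :
    ∀ {u w : Vtx Job},
      Walk (Vtx Job) (Arc bj fj Hb Hf blunch flunch tbr tmax tml) u w →
      List (Bool × ℤ × WithBot ℤ)
  | _, _, .nil _ => []
  | _, _, @Walk.cons _ _ u v _ _ p =>
      (match u with
        | .jv j _ _ => [(vl j, xb j, arcEnd blunch tbr tml xe u v)]
        | _ => []) ++ walkData p

/-- The delay simulation: given the time from which the agent is available
(`⊥` = immediately, i.e. the previous job was rescheduled) and the list of job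
data, return the number of rescheduled jobs and the time at which the agent
finishes its last non-rescheduled job (`⊥` if the last job is rescheduled). A
job is rescheduled iff it is very late or the agent is unavailable at its
realized beginning time. -/
noncomputable def simul : WithBot ℤ → List (Bool × ℤ × WithBot ℤ) → ℕ × WithBot ℤ
  | r, [] => (0, r)
  | r, (b, s, t) :: rest =>
      if b = true ∨ (s : WithBot ℤ) < r then
        ((simul ⊥ rest).1 + 1, (simul ⊥ rest).2)
      else simul t rest

end ShiftDigraph

lemma MW.e_plus (q : MW) : MW.plus MW.e q = q := by cases q <;> rfl

noncomputable def entryRes (e : Bool × ℤ × WithBot ℤ) : MW :=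
  MW.res ⟨((e.2.1 : ℤ) : WithBot ℤ), (if e.1 then 1 else 0),
    (if e.1 then ⊥ else e.2.2), 1, ⊥⟩

noncomputable def foldL (L : List (Bool × ℤ × WithBot ℤ)) : MW :=
  L.foldr (fun e m => MW.plus (entryRes e) m) MW.e

lemma res_eq_foldL {Job : Type} (bj fj : Job → ℤ) (Hb Hf : Finset ℤ)
    (blunch flunch tbr tmax tml : ℤ) (xb xe : Job → ℤ) (vl : Job → Bool) :
    ∀ {u w : Vtx Job}
      (p : Walk (Vtx Job) (Arc bj fj Hb Hf blunch flunch tbr tmax tml) u w),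
      p.res MW.plus MW.e (fun u v _ => qarc blunch tbr tml xb xe vl u v)
        = foldL (walkData bj fj Hb Hf blunch flunch tbr tmax tml xb xe vl p) := by
  intro u w p
  induction p with
  | nil v => rfl
  | cons h p ih =>
      rename_i u v w
      cases u
      case jv j hb bl => show MW.plus _ _ = _; rw [ih]; rfl
      all_goals (show MW.plus MW.e _ = _; rw [MW.e_plus, ih]; simp [walkData])

lemma foldL_spec (b : Bool) (s : ℤ) (t : WithBot ℤ)
    (L : List (Bool × ℤ × WithBot ℤ)) :
    foldL ((b, s, t) :: L)
      = MW.res ⟨((s : ℤ) : WithBot ℤ), (simul ⊥ ((b, s, t) :: L)).1,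
          (simul ⊥ ((b, s, t) :: L)).2, (simul ⊥ L).1 + 1, (simul ⊥ L).2⟩ := by
  induction L generalizing b s t with
  | nil =>
      cases b <;> simp [foldL, entryRes, simul, MW.plus]
  | cons e L ih =>
      obtain ⟨b', s', t'⟩ := e
      have h1 : foldL ((b, s, t) :: (b', s', t') :: L)
          = MW.plus (entryRes (b, s, t)) (foldL ((b', s', t') :: L)) := rfl
      rw [h1, ih]
      cases b
      · by_cases ht : t ≤ (s' : WithBot ℤ)
        · have hns : ¬ ((s' : WithBot ℤ) < t) := not_lt.mpr ht
          simp [entryRes, MW.plus, ResW.plus, simul, ht, hns]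
          exact Nat.add_comm 1 _
        · have hs : (s' : WithBot ℤ) < t := lt_of_not_ge ht
          simp [entryRes, MW.plus, ResW.plus, simul, ht, hs]
          exact Nat.add_comm 1 _
      · simp [entryRes, MW.plus, ResW.plus, simul]
        omega

/-- for an `o`–`d` path `P` of the shift digraph, the `⊕`-sum of
the scenario-`ω` arc resources along `P` equals the resource whose `t_bg` is
the realized start time of the first job of the corresponding shift, whose
do-pair is (number of rescheduled jobs, realized completion time of the last
non-rescheduled job), and whose dt-pair is the same pair computed as if the
first job were rescheduled; in particular the `c_do`-component of
`⊕_{a∈P} q_a^ω` equals the number of rescheduled jobs of the shift of `P`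
under `ω`. -/
theorem path_resource_semantics
    {Job : Type} (bj fj : Job → ℤ) (Hb Hf : Finset ℤ)
    (blunch flunch tbr tmax tml : ℤ)
    (xb xe : Job → ℤ) (vl : Job → Bool)
    (P : Walk (Vtx Job) (Arc bj fj Hb Hf blunch flunch tbr tmax tml) .o .d)
    (vl₀ : Bool) (s₀ : ℤ) (t₀ : WithBot ℤ)
    (L : List (Bool × ℤ × WithBot ℤ))
    (hdata : walkData bj fj Hb Hf blunch flunch tbr tmax tml xb xe vl P
      = (vl₀, s₀, t₀) :: L) :
    P.res MW.plus MW.e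
        (fun u v _ => qarc blunch tbr tml xb xe vl u v)
      = MW.res ⟨((s₀ : ℤ) : WithBot ℤ),
          (simul ⊥ ((vl₀, s₀, t₀) :: L)).1,
          (simul ⊥ ((vl₀, s₀, t₀) :: L)).2,
          (simul ⊥ L).1 + 1,
          (simul ⊥ L).2⟩ := by
  rw [res_eq_foldL, hdata, foldL_spec]
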